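/- Let S : ℝ² ⇉ ℝ² be the solution mapping of the linear complementarity problem S(q) = {x ∈ ℝ² | x ≥ 0, Mx + q ≥ 0, ⟨x, Mx + q⟩ = 0} with M = [[−1, 0], [1, 1]]. Then dom S = ℝ₊ × ℝ, and at (q̄, x̄) = (0, 0), S fails the ordinary Lipschitz-like property (indeed D*S(0 | 0)(0) ⊇ ℝ₋ × {0}), but S has the Lipschitz-like property relative to dom S at 0 for 0, with lip_{dom S} S(0 | 0) = √((3 + √5)/2). -/

import Mathlib

open Filter Metric Set
open scoped Topology RealInnerProductSpace

noncomputable section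

abbrev Eu (n : ℕ) := EuclideanSpace ℝ (Fin n)

section GeneralDefs

variable {E F : Type*} [NormedAddCommGroup E] [NormedSpace ℝ E]
  [NormedAddCommGroup F] [NormedSpace ℝ F]

/-- `v` is a proximal normal vector to `A` at `a`: for some `t > 0`,
`a` is a nearest point of `A` to `a + t • v`. -/
def proxNormal (A : Set E) (a : E) : Set E :=
  {v | ∃ t : ℝ, 0 < t ∧ ‖t • v‖ = Metric.infDist (a + t • v) A}

/-- the set of nearest points of `K` to `x` (metric projection). -/
def projSet (K : Set E) (x : E) : Set E :=
  {y | y ∈ K ∧ ∀ z ∈ K, ‖x - y‖ ≤ ‖x - z‖}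

/-- the contingent (tangent) cone to `X` at `x`. -/
def tangCone (X : Set E) (x : E) : Set E :=
  {w | ∃ (t : ℕ → ℝ) (v : ℕ → E), (∀ k, 0 < t k) ∧ Tendsto t atTop (𝓝 0) ∧
    Tendsto v atTop (𝓝 w) ∧ ∀ k, x + t k • v k ∈ X}

/-- `A` is locally closed at `a`. -/
def LocallyClosedAt (A : Set E) (a : E) : Prop := ∃ U ∈ 𝓝 a, IsClosed (A ∩ U)

/-- the graph of the restriction `S|_X`. -/
def svGraph (S : E → Set F) (X : Set E) : Set (E × F) := {p | p.1 ∈ X ∧ p.2 ∈ S p.1}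

/-- the Lipschitz-like property of `S` relative to `X` at `x₀` for `u₀` with constant `κ`. -/
def LipschitzLikeRel (S : E → Set F) (X : Set E) (x₀ : E) (u₀ : F) (κ : ℝ) : Prop :=
  LocallyClosedAt (svGraph S univ) (x₀, u₀) ∧
  ∃ V ∈ 𝓝 x₀, ∃ W ∈ 𝓝 u₀, ∀ x ∈ X ∩ V, ∀ x' ∈ X ∩ V, ∀ u ∈ S x' ∩ W,
    ∃ u'' ∈ S x, ‖u - u''‖ ≤ κ * ‖x' - x‖

/-- the graphical modulus of `S` relative to `X` at `x₀` for `u₀` (as an extended real,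
the infimum of all Lipschitz-like constants). -/
def gmod (S : E → Set F) (X : Set E) (x₀ : E) (u₀ : F) : EReal :=
  sInf {c : EReal | ∃ κ : ℝ, 0 ≤ κ ∧ c = (κ : EReal) ∧
    ∃ V ∈ 𝓝 x₀, ∃ W ∈ 𝓝 u₀, ∀ x ∈ X ∩ V, ∀ x' ∈ X ∩ V, ∀ u ∈ S x' ∩ W,
      ∃ u'' ∈ S x, ‖u - u''‖ ≤ κ * ‖x' - x‖}

/-- the horizon cone of `A`. -/
def horizonCone (A : Set E) : Set E :=
  {w | ∃ (a : ℕ → E) (l : ℕ → ℝ), (∀ k, a k ∈ A) ∧ (∀ k, 0 < l k) ∧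
    Tendsto l atTop (𝓝 0) ∧ Tendsto (fun k => l k • a k) atTop (𝓝 w)}

/-- extended-real absolute difference `|a - b|`. -/
def eabsdiff (a b : EReal) : EReal := max (a - b) (b - a)

/-- `f` is locally Lipschitz continuous at `x₀` relative to `X`. -/
def RelLipschitzAt (f : E → EReal) (X : Set E) (x₀ : E) : Prop :=
  ∃ κ : ℝ, 0 ≤ κ ∧ ∃ V ∈ 𝓝 x₀, ∀ x ∈ X ∩ V, ∀ y ∈ X ∩ V,
    eabsdiff (f x) (f y) ≤ ((κ * ‖x - y‖ : ℝ) : EReal)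

/-- the Lipschitz modulus of `f` at `x₀` relative to `X` (as an extended real). -/
def relLipMod (f : E → EReal) (X : Set E) (x₀ : E) : EReal :=
  sInf {c : EReal | ∃ κ : ℝ, 0 ≤ κ ∧ c = (κ : EReal) ∧ ∃ V ∈ 𝓝 x₀,
    ∀ x ∈ X ∩ V, ∀ y ∈ X ∩ V, eabsdiff (f x) (f y) ≤ ((κ * ‖x - y‖ : ℝ) : EReal)}

end GeneralDefs

section InnerDefs

variable {E F : Type*} [NormedAddCommGroup E] [InnerProductSpace ℝ E]
  [NormedAddCommGroup F] [InnerProductSpace ℝ F]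

/-- the regular (Fréchet) normal cone to `A ⊆ E × F` at `a`. -/
def regNormalP (A : Set (E × F)) (a : E × F) : Set (E × F) :=
  {v | ∀ ε : ℝ, 0 < ε → ∃ δ > 0, ∀ b ∈ A, ‖b - a‖ ≤ δ →
    ⟪v.1, b.1 - a.1⟫ + ⟪v.2, b.2 - a.2⟫ ≤ ε * ‖b - a‖}

/-- the limiting (Mordukhovich) normal cone to `A ⊆ E × F` at `a`. -/
def limNormalP (A : Set (E × F)) (a : E × F) : Set (E × F) :=
  {v | ∃ (b : ℕ → E × F) (w : ℕ → E × F), (∀ k, b k ∈ A) ∧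
    (∀ k, w k ∈ regNormalP A (b k)) ∧ Tendsto b atTop (𝓝 a) ∧ Tendsto w atTop (𝓝 v)}

/-- the limiting coderivative of `S` at `x` for `u`:
`xs ∈ coderiv S x u us ↔ (xs, -us) ∈ N_{graph S}(x, u)`. -/
def coderiv (S : E → Set F) (x : E) (u : F) (us : F) : Set E :=
  {xs | (xs, -us) ∈ limNormalP (svGraph S univ) (x, u)}

/-- the projectional coderivative of `S` at `x₀` for `u₀` with respect to `X`. -/
def projCoderiv (S : E → Set F) (X : Set E) (x₀ : E) (u₀ : F) (us : F) : Set E :=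
  {xs | ∃ (x : ℕ → E) (u : ℕ → F) (xv : ℕ → E) (uv : ℕ → F) (y : ℕ → E),
    (∀ k, (x k, u k) ∈ svGraph S X) ∧
    (∀ k, (xv k, -(uv k)) ∈ limNormalP (svGraph S X) (x k, u k)) ∧
    (∀ k, y k ∈ projSet (tangCone X (x k)) (xv k)) ∧
    Tendsto x atTop (𝓝 x₀) ∧ Tendsto u atTop (𝓝 u₀) ∧
    Tendsto uv atTop (𝓝 us) ∧ Tendsto y atTop (𝓝 xs)}

/-- the regular (Fréchet) subdifferential of an extended-real-valued function. -/
def regSubdiff (g : E → EReal) (x : E) : Set E :=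
  {v | ∀ ε : ℝ, 0 < ε → ∃ δ > 0, ∀ y, ‖y - x‖ ≤ δ →
    g x + ((⟪v, y - x⟫ - ε * ‖y - x‖ : ℝ) : EReal) ≤ g y}

/-- the limiting (Mordukhovich) subdifferential. -/
def limSubdiff (g : E → EReal) (x : E) : Set E :=
  {v | ∃ (xk vk : ℕ → E), Tendsto xk atTop (𝓝 x) ∧
    Tendsto (fun k => g (xk k)) atTop (𝓝 (g x)) ∧
    (∀ k, vk k ∈ regSubdiff g (xk k)) ∧ Tendsto vk atTop (𝓝 v)}

/-- the horizon (singular) subdifferential. -/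
def horizonSubdiff (g : E → EReal) (x : E) : Set E :=
  {v | ∃ (xk vk : ℕ → E) (lk : ℕ → ℝ), Tendsto xk atTop (𝓝 x) ∧
    Tendsto (fun k => g (xk k)) atTop (𝓝 (g x)) ∧ (∀ k, 0 < lk k) ∧
    Tendsto lk atTop (𝓝 0) ∧ (∀ k, vk k ∈ regSubdiff g (xk k)) ∧
    Tendsto (fun k => lk k • vk k) atTop (𝓝 v)}

/-- the outer limiting subdifferential of `g` at `xb` with respect to `vb`. -/
def outerSubdiffWrt (g : E → EReal) (xb vb : E) : Set E :=
  {v | ∃ (xk vk : ℕ → E), Tendsto xk atTop (𝓝 xb) ∧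
    Tendsto (fun k => g (xk k)) atTop (𝓝 (g xb)) ∧
    (∀ k, g xb + ((⟪vb, xk k - xb⟫ : ℝ) : EReal) < g (xk k)) ∧
    (∀ k, vk k ∈ limSubdiff g (xk k)) ∧ Tendsto vk atTop (𝓝 v)}

/-- `D` is a convex polyhedron (finite intersection of closed half-spaces). -/
def IsPolyhedral (D : Set E) : Prop :=
  ∃ s : Finset (E × ℝ), D = {v | ∀ p ∈ s, ⟪p.1, v⟫ ≤ p.2}

/-- the support function of `D`. -/
def supportFn (D : Set E) : E → EReal :=
  fun x => sSup ((fun v => ((⟪v, x⟫ : ℝ) : EReal)) '' D)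

end InnerDefs


def e2 (a b : ℝ) : Eu 2 := (WithLp.equiv 2 (Fin 2 → ℝ)).symm ![a, b]

@[simp] lemma e2_zero (a b : ℝ) : e2 a b 0 = a := rfl
@[simp] lemma e2_one (a b : ℝ) : e2 a b 1 = b := rfl

lemma eu2_ext {x y : Eu 2} (h0 : x 0 = y 0) (h1 : x 1 = y 1) : x = y := by
  ext i; fin_cases i <;> assumption

lemma norm_eu2 (x : Eu 2) : ‖x‖ = Real.sqrt (x 0 ^ 2 + x 1 ^ 2) := by
  rw [EuclideanSpace.norm_eq]; simp [Fin.sum_univ_two, sq_abs]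

lemma sq_norm_eu2 (x : Eu 2) : ‖x‖ ^ 2 = x 0 ^ 2 + x 1 ^ 2 := by
  rw [norm_eu2, Real.sq_sqrt (by positivity)]

lemma norm_le_of_sq (x : Eu 2) (r : ℝ) (hr : 0 ≤ r) (h : x 0 ^ 2 + x 1 ^ 2 ≤ r ^ 2) :
    ‖x‖ ≤ r := by
  rw [norm_eu2]
  calc Real.sqrt (x 0 ^ 2 + x 1 ^ 2) ≤ Real.sqrt (r ^ 2) := Real.sqrt_le_sqrt h
  _ = r := Real.sqrt_sq hr

lemma abs_apply_le_norm (x : Eu 2) (i : Fin 2) : |x i| ≤ ‖x‖ := by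
  have h : x i ^ 2 ≤ x 0 ^ 2 + x 1 ^ 2 := by
    fin_cases i
    · show x 0 ^ 2 ≤ _; nlinarith [sq_nonneg (x 1)]
    · show x 1 ^ 2 ≤ _; nlinarith [sq_nonneg (x 0)]
  rw [norm_eu2, ← Real.sqrt_sq_eq_abs]
  exact Real.sqrt_le_sqrt h

lemma norm_le_abs_add (x : Eu 2) : ‖x‖ ≤ |x 0| + |x 1| := by
  apply norm_le_of_sq _ _ (by positivity)
  nlinarith [sq_abs (x 0), sq_abs (x 1), mul_nonneg (abs_nonneg (x 0)) (abs_nonneg (x 1))]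

def lcpS1 (q : Eu 2) : Eu 2 := e2 0 (max 0 (-q 1))
def lcpS2 (q : Eu 2) : Eu 2 := e2 (q 0) (max 0 (-(q 0 + q 1)))

lemma lcp_mem_iff (q x : Eu 2) (hq : 0 ≤ q 0) :
    (0 ≤ x 0 ∧ 0 ≤ x 1 ∧ 0 ≤ -x 0 + q 0 ∧ 0 ≤ x 0 + x 1 + q 1 ∧
      x 0 * (-x 0 + q 0) + x 1 * (x 0 + x 1 + q 1) = 0) ↔ (x = lcpS1 q ∨ x = lcpS2 q) := by
  constructor
  · rintro ⟨h1, h2, h3, h4, h5⟩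
    have e1 : x 0 * (-x 0 + q 0) = 0 := by nlinarith [mul_nonneg h1 h3, mul_nonneg h2 h4]
    have e2' : x 1 * (x 0 + x 1 + q 1) = 0 := by linarith
    rcases mul_eq_zero.mp e1 with hx0 | hx0 <;> rcases mul_eq_zero.mp e2' with hx1 | hx1
    · exact Or.inl (eu2_ext (by simp [lcpS1, hx0]) (by
        simp only [lcpS1, e2_one]
        rw [max_eq_left (by rw [hx0] at h4; linarith)]; exact hx1))
    · exact Or.inl (eu2_ext (by simp [lcpS1, hx0]) (by
        simp only [lcpS1, e2_one]
        rw [max_eq_right (by rw [hx0] at hx1; linarith)]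
        rw [hx0] at hx1; linarith))
    · refine Or.inr (eu2_ext (by simp [lcpS2]; linarith) ?_)
      simp only [lcpS2, e2_one]
      rw [max_eq_left (by rw [hx1] at h4; linarith)]; exact hx1
    · refine Or.inr (eu2_ext (by simp [lcpS2]; linarith) ?_)
      simp only [lcpS2, e2_one]
      rw [max_eq_right (by linarith)]; linarith
  · rintro (rfl | rfl)
    · simp only [lcpS1, e2_zero, e2_one]
      rcases le_total (q 1) 0 with h | h
      · rw [max_eq_right (by linarith)]
        refine ⟨le_rfl, by linarith, by linarith, by linarith, by ring⟩
      · rw [max_eq_left (by linarith)]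
        refine ⟨le_rfl, le_rfl, by linarith, by linarith, by ring⟩
    · simp only [lcpS2, e2_zero, e2_one]
      rcases le_total (q 0 + q 1) 0 with h | h
      · rw [max_eq_right (by linarith)]
        refine ⟨hq, by linarith, by linarith, by linarith, by ring⟩
      · rw [max_eq_left (by linarith)]
        refine ⟨hq, le_rfl, by linarith, by linarith, by ring⟩

lemma sqrt5_sq : (Real.sqrt 5) ^ 2 = 5 := Real.sq_sqrt (by norm_num)

lemma sqrt5_ge : 2 ≤ Real.sqrt 5 := by nlinarith [sqrt5_sq, Real.sqrt_nonneg 5]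

lemma sqrt5_le : Real.sqrt 5 ≤ 3 := by nlinarith [sqrt5_sq, Real.sqrt_nonneg 5]

lemma kappa_sq : Real.sqrt ((3 + Real.sqrt 5) / 2) ^ 2 = (3 + Real.sqrt 5) / 2 :=
  Real.sq_sqrt (by positivity)

lemma one_le_kappa : 1 ≤ Real.sqrt ((3 + Real.sqrt 5) / 2) := by
  rw [show (1 : ℝ) = Real.sqrt 1 from (Real.sqrt_one).symm]
  exact Real.sqrt_le_sqrt (by nlinarith [Real.sqrt_nonneg 5])

lemma kappa_nonneg : 0 ≤ Real.sqrt ((3 + Real.sqrt 5) / 2) := Real.sqrt_nonneg _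

lemma key_quad (a b : ℝ) :
    2 * a ^ 2 + 2 * a * b + b ^ 2 ≤ (3 + Real.sqrt 5) / 2 * (a ^ 2 + b ^ 2) := by
  nlinarith [sq_nonneg ((Real.sqrt 5 - 1) * a - 2 * b), sqrt5_sq, sqrt5_ge]

lemma max_diff_le (u v : ℝ) : |max 0 (-u) - max 0 (-v)| ≤ |v - u| := by
  rw [max_comm 0 (-u), max_comm 0 (-v)]
  calc |max (-u) 0 - max (-v) 0| ≤ |(-u) - (-v)| := abs_max_sub_max_le_abs _ _ _
  _ = |v - u| := by rw [show (-u) - (-v) = v - u from by ring]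

lemma s1_lip (q q' : Eu 2) :
    ‖lcpS1 q' - lcpS1 q‖ ≤ Real.sqrt ((3 + Real.sqrt 5) / 2) * ‖q' - q‖ := by
  have hb : |(q' - q) 1| ≤ ‖q' - q‖ := abs_apply_le_norm _ 1
  have hb' : (q' - q) 1 = q' 1 - q 1 := by simp
  have hd2 : |max 0 (-q' 1) - max 0 (-q 1)| ≤ ‖q' - q‖ := by
    calc |max 0 (-q' 1) - max 0 (-q 1)| ≤ |q 1 - q' 1| := max_diff_le _ _
    _ = |(q' - q) 1| := by rw [hb', abs_sub_comm]
    _ ≤ ‖q' - q‖ := hb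
  have hd3 : (max 0 (-q' 1) - max 0 (-q 1)) ^ 2 ≤ ‖q' - q‖ ^ 2 := by
    have := pow_le_pow_left₀ (abs_nonneg _) hd2 2
    simpa [sq_abs] using this
  apply norm_le_of_sq _ _ (by positivity)
  have h0 : (lcpS1 q' - lcpS1 q) 0 = 0 := by simp [lcpS1]
  have h1 : (lcpS1 q' - lcpS1 q) 1 = max 0 (-q' 1) - max 0 (-q 1) := by simp [lcpS1]
  rw [h0, h1, mul_pow, kappa_sq]
  nlinarith [hd3, sq_nonneg ‖q' - q‖, Real.sqrt_nonneg 5]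

lemma s2_lip (q q' : Eu 2) :
    ‖lcpS2 q' - lcpS2 q‖ ≤ Real.sqrt ((3 + Real.sqrt 5) / 2) * ‖q' - q‖ := by
  have key : ∀ a b d : ℝ, d ^ 2 ≤ (a + b) ^ 2 →
      a ^ 2 + d ^ 2 ≤ (3 + Real.sqrt 5) / 2 * (a ^ 2 + b ^ 2) := by
    intro a b d hd
    nlinarith [key_quad a b]
  have hc : |max 0 (-(q' 0 + q' 1)) - max 0 (-(q 0 + q 1))| ≤ |(q' 0 - q 0) + (q' 1 - q 1)| := by
    calc |max 0 (-(q' 0 + q' 1)) - max 0 (-(q 0 + q 1))|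
        ≤ |(q 0 + q 1) - (q' 0 + q' 1)| := max_diff_le _ _
    _ = |-((q' 0 - q 0) + (q' 1 - q 1))| := by ring_nf
    _ = _ := abs_neg _
  have hdsq : (max 0 (-(q' 0 + q' 1)) - max 0 (-(q 0 + q 1))) ^ 2
      ≤ ((q' 0 - q 0) + (q' 1 - q 1)) ^ 2 := by
    have := pow_le_pow_left₀ (abs_nonneg _) hc 2
    simpa [sq_abs] using this
  apply norm_le_of_sq _ _ (by positivity)
  have h0 : (lcpS2 q' - lcpS2 q) 0 = q' 0 - q 0 := by simp [lcpS2]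
  have h1 : (lcpS2 q' - lcpS2 q) 1 = max 0 (-(q' 0 + q' 1)) - max 0 (-(q 0 + q 1)) := by
    simp [lcpS2]
  have hab0 : (q' - q) 0 = q' 0 - q 0 := by simp
  have hab1 : (q' - q) 1 = q' 1 - q 1 := by simp
  rw [h0, h1, mul_pow, kappa_sq, sq_norm_eu2, hab0, hab1]
  exact key _ _ _ hdsq

lemma lcp_final (κ' t : ℝ) (ht : 0 < t) (h0 : 0 ≤ κ')
    (hlt : κ' < Real.sqrt ((3 + Real.sqrt 5) / 2))
    (hb2 : (2*t)^2 + (-((Real.sqrt 5 + 1) * t))^2 ≤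
      κ'^2 * ((2*t)^2 + ((Real.sqrt 5 - 1)*t)^2)) :
    False := by
  have hκsq : κ' ^ 2 < (3 + Real.sqrt 5) / 2 := by
    nlinarith [kappa_sq, kappa_nonneg]
  have hpos : 0 < t^2 * (10 - 2*Real.sqrt 5) := by nlinarith [mul_pos ht ht, sqrt5_le]
  have hts : t^2 * (Real.sqrt 5 ^ 2) = t^2 * 5 := by rw [sqrt5_sq]
  nlinarith [mul_lt_mul_of_pos_right hκsq hpos, hts]

/-- Example 2.1: for the solution mapping of the linear complementarity
problem with `M = [[-1, 0], [1, 1]]`, one has `dom S = ℝ₊ × ℝ`; at `(q̄, x̄) = (0, 0)` the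
ordinary Lipschitz-like property fails (indeed `D*S(0|0)(0) ⊇ ℝ₋ × {0}`), but `S` has the
Lipschitz-like property relative to `dom S`, with modulus `√((3 + √5)/2)`. -/

theorem lcp_example (S : Eu 2 → Set (Eu 2))
    (hS : S = fun q : Eu 2 => {x : Eu 2 |
      0 ≤ x 0 ∧ 0 ≤ x 1 ∧ 0 ≤ -x 0 + q 0 ∧ 0 ≤ x 0 + x 1 + q 1 ∧
      x 0 * (-x 0 + q 0) + x 1 * (x 0 + x 1 + q 1) = 0}) :
    {q : Eu 2 | (S q).Nonempty} = {q : Eu 2 | 0 ≤ q 0} ∧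
    (¬ ∃ κ : ℝ, 0 ≤ κ ∧ LipschitzLikeRel S univ 0 0 κ) ∧
    {v : Eu 2 | v 0 ≤ 0 ∧ v 1 = 0} ⊆ coderiv S 0 0 0 ∧
    (∃ κ : ℝ, 0 ≤ κ ∧ LipschitzLikeRel S {q : Eu 2 | 0 ≤ q 0} 0 0 κ) ∧
    gmod S {q : Eu 2 | 0 ≤ q 0} 0 0 =
      ((Real.sqrt ((3 + Real.sqrt 5) / 2) : ℝ) : EReal) := by
  have hmemS : ∀ q x : Eu 2, x ∈ S q ↔
      (0 ≤ x 0 ∧ 0 ≤ x 1 ∧ 0 ≤ -x 0 + q 0 ∧ 0 ≤ x 0 + x 1 + q 1 ∧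
        x 0 * (-x 0 + q 0) + x 1 * (x 0 + x 1 + q 1) = 0) := by
    intro q x; rw [hS]; exact Iff.rfl
  have hSchar : ∀ q : Eu 2, 0 ≤ q 0 → ∀ x, (x ∈ S q ↔ x = lcpS1 q ∨ x = lcpS2 q) := by
    intro q hq x; rw [hmemS]; exact lcp_mem_iff q x hq
  have hS1mem : ∀ q, 0 ≤ q 0 → lcpS1 q ∈ S q := fun q hq => (hSchar q hq _).mpr (Or.inl rfl)
  have hS2mem : ∀ q, 0 ≤ q 0 → lcpS2 q ∈ S q := fun q hq => (hSchar q hq _).mpr (Or.inr rfl)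
  have hzero : (0 : Eu 2) ∈ S 0 := by
    rw [hmemS]; norm_num
  have main : ∀ x ∈ {q : Eu 2 | 0 ≤ q 0} ∩ univ, ∀ x' ∈ {q : Eu 2 | 0 ≤ q 0} ∩ univ,
      ∀ u ∈ S x' ∩ univ, ∃ u'' ∈ S x,
        ‖u - u''‖ ≤ Real.sqrt ((3 + Real.sqrt 5) / 2) * ‖x' - x‖ := by
    rintro q ⟨hq, -⟩ q' ⟨hq', -⟩ u ⟨huS, -⟩
    rcases (hSchar q' hq' u).mp huS with rfl | rfl
    · exact ⟨lcpS1 q, hS1mem q hq, s1_lip q q'⟩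
    · exact ⟨lcpS2 q, hS2mem q hq, s2_lip q q'⟩
  have hclosed : IsClosed (svGraph S univ) := by
    have hgr : svGraph S univ = {p : Eu 2 × Eu 2 | 0 ≤ p.2 0 ∧ 0 ≤ p.2 1 ∧
        0 ≤ -p.2 0 + p.1 0 ∧ 0 ≤ p.2 0 + p.2 1 + p.1 1 ∧
        p.2 0 * (-p.2 0 + p.1 0) + p.2 1 * (p.2 0 + p.2 1 + p.1 1) = 0} := by
      ext p
      simp only [svGraph, mem_setOf_eq, mem_univ, true_and]
      exact hmemS p.1 p.2
    rw [hgr]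
    have c1 : ∀ i : Fin 2, Continuous fun p : Eu 2 × Eu 2 => p.1 i := fun i =>
      (EuclideanSpace.proj i : Eu 2 →L[ℝ] ℝ).continuous.comp continuous_fst
    have c2 : ∀ i : Fin 2, Continuous fun p : Eu 2 × Eu 2 => p.2 i := fun i =>
      (EuclideanSpace.proj i : Eu 2 →L[ℝ] ℝ).continuous.comp continuous_snd
    rw [setOf_and, setOf_and, setOf_and, setOf_and]
    refine IsClosed.inter (isClosed_le continuous_const (c2 0))
      (IsClosed.inter (isClosed_le continuous_const (c2 1))
        (IsClosed.inter (isClosed_le continuous_const ((c2 0).neg.add (c1 0)))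
          (IsClosed.inter (isClosed_le continuous_const (((c2 0).add (c2 1)).add (c1 1)))
            (isClosed_eq (((c2 0).mul ((c2 0).neg.add (c1 0))).add
              ((c2 1).mul (((c2 0).add (c2 1)).add (c1 1)))) continuous_const))))
  refine ⟨?_, ?_, ?_, ?_, ?_⟩
  · -- dom S
    ext q
    simp only [mem_setOf_eq]
    constructor
    · rintro ⟨x, hx⟩
      rw [hmemS] at hx
      obtain ⟨h1, -, h3, -, -⟩ := hx
      linarith
    · intro hq
      exact ⟨lcpS1 q, hS1mem q hq⟩
  · -- ordinary Lipschitz-like fails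
    rintro ⟨κ', hκ'0, -, V, hV, W, hW, h⟩
    obtain ⟨ε, hε, hball⟩ := Metric.mem_nhds_iff.mp hV
    have hxV : e2 (-(ε / 2)) 0 ∈ univ ∩ V := by
      refine ⟨mem_univ _, hball ?_⟩
      rw [mem_ball, dist_zero_right]
      have h1 := norm_le_abs_add (e2 (-(ε / 2)) 0)
      have h2 : |(e2 (-(ε / 2)) 0) 0| = ε / 2 := by
        rw [e2_zero, abs_neg, abs_of_nonneg (by linarith)]
      have h3 : |(e2 (-(ε / 2)) 0) 1| = 0 := by rw [e2_one, abs_zero]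
      rw [h2, h3] at h1
      linarith
    obtain ⟨u'', hu'', -⟩ := h (e2 (-(ε / 2)) 0) hxV 0 ⟨mem_univ _, mem_of_mem_nhds hV⟩
      0 ⟨hzero, mem_of_mem_nhds hW⟩
    rw [hmemS] at hu''
    obtain ⟨h1, -, h3, -, -⟩ := hu''
    rw [e2_zero] at h3
    linarith
  · -- coderivative inclusion
    rintro v ⟨hv0, hv1⟩
    simp only [coderiv, mem_setOf_eq]
    refine ⟨fun _ => ((0 : Eu 2), (0 : Eu 2)), fun _ => (v, (0 : Eu 2)),
      fun _ => ⟨mem_univ _, hzero⟩, fun _ => ?_, tendsto_const_nhds, ?_⟩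
    · intro ε' hε'
      refine ⟨1, one_pos, fun p hp _ => ?_⟩
      have hq0 : 0 ≤ p.1 0 := by
        have := (hmemS p.1 p.2).mp hp.2
        obtain ⟨h1, -, h3, -, -⟩ := this
        linarith
      have hi1 : (inner ℝ v (p.1 - 0) : ℝ) = v 0 * p.1 0 + v 1 * p.1 1 := by
        rw [sub_zero]
        simp [PiLp.inner_apply, Fin.sum_univ_two, mul_comm]
      have hi2 : (inner ℝ (0 : Eu 2) (p.2 - 0) : ℝ) = 0 := inner_zero_left _
      show (inner ℝ v (p.1 - 0) : ℝ) + (inner ℝ (0 : Eu 2) (p.2 - 0) : ℝ) ≤ _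
      rw [hi1, hi2, hv1]
      have : v 0 * p.1 0 ≤ 0 := mul_nonpos_iff.mpr (Or.inr ⟨hv0, hq0⟩)
      have hr : 0 ≤ ε' * ‖p - ((0 : Eu 2), (0 : Eu 2))‖ :=
        mul_nonneg hε'.le (norm_nonneg _)
      linarith
    · rw [neg_zero]
      exact tendsto_const_nhds
  · -- relative Lipschitz-like holds
    exact ⟨Real.sqrt ((3 + Real.sqrt 5) / 2), kappa_nonneg,
      ⟨univ, univ_mem, by rw [inter_univ]; exact hclosed⟩,
      univ, univ_mem, univ, univ_mem, main⟩
  · -- exact modulus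
    apply le_antisymm
    · exact sInf_le ⟨Real.sqrt ((3 + Real.sqrt 5) / 2), kappa_nonneg, rfl,
        univ, univ_mem, univ, univ_mem, main⟩
    · apply le_sInf
      rintro c ⟨κ', hκ'0, rfl, V, hV, W, hW, h⟩
      rw [EReal.coe_le_coe_iff]
      by_contra hcon
      push_neg at hcon
      obtain ⟨ε1, hε1, hbV⟩ := Metric.mem_nhds_iff.mp hV
      obtain ⟨ε2, hε2, hbW⟩ := Metric.mem_nhds_iff.mp hW
      set ρ : ℝ := min ε1 ε2 / 6 with hρdef
      have hρpos : 0 < ρ := by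
        have := lt_min hε1 hε2
        positivity
      set t : ℝ := ρ / (8 * (κ' + 1)) with htdef
      have htpos : 0 < t := by positivity
      have ht8 : t * (8 * (κ' + 1)) = ρ := by
        rw [htdef]; field_simp
      have htρ : 8 * t ≤ ρ := by nlinarith
      have hs2 := sqrt5_sq
      have hsge := sqrt5_ge
      have hsle := sqrt5_le
      have hρ1 : 6 * ρ ≤ ε1 := by
        rw [hρdef]
        have := min_le_left ε1 ε2
        linarith
      have hρ2 : 6 * ρ ≤ ε2 := by
        rw [hρdef]
        have := min_le_right ε1 ε2
        linarith
      -- the test points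
      have hqX : (0 : ℝ) ≤ (e2 ρ (-(2 * ρ))) 0 := by rw [e2_zero]; positivity
      have hq'X : (0 : ℝ) ≤ (e2 (ρ + 2 * t) (-(2 * ρ) + (Real.sqrt 5 - 1) * t)) 0 := by
        rw [e2_zero]; positivity
      have hqV : e2 ρ (-(2 * ρ)) ∈ V := by
        apply hbV
        rw [mem_ball, dist_zero_right]
        have h1 := norm_le_abs_add (e2 ρ (-(2 * ρ)))
        rw [e2_zero, e2_one, abs_of_nonneg hρpos.le, abs_neg,
          abs_of_nonneg (by linarith : (0:ℝ) ≤ 2 * ρ)] at h1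
        linarith
      have hq'V : e2 (ρ + 2 * t) (-(2 * ρ) + (Real.sqrt 5 - 1) * t) ∈ V := by
        apply hbV
        rw [mem_ball, dist_zero_right]
        have h1 := norm_le_abs_add (e2 (ρ + 2 * t) (-(2 * ρ) + (Real.sqrt 5 - 1) * t))
        rw [e2_zero, e2_one] at h1
        have h2 : |ρ + 2 * t| ≤ ρ + 2 * t := le_of_eq (abs_of_nonneg (by positivity))
        have h3 : |(-(2 * ρ) + (Real.sqrt 5 - 1) * t)| ≤ 2 * ρ + 2 * t := by
          rw [abs_le]
          constructor <;> nlinarith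
        linarith
      have hneg : 0 ≤ ρ - (Real.sqrt 5 + 1) * t := by nlinarith
      have huS2 : e2 (ρ + 2 * t) (ρ - (Real.sqrt 5 + 1) * t) =
          lcpS2 (e2 (ρ + 2 * t) (-(2 * ρ) + (Real.sqrt 5 - 1) * t)) := by
        apply eu2_ext
        · rw [e2_zero]; simp [lcpS2]
        · rw [e2_one]
          simp only [lcpS2, e2_zero, e2_one]
          rw [show -((ρ + 2 * t) + (-(2 * ρ) + (Real.sqrt 5 - 1) * t)) =
            ρ - (Real.sqrt 5 + 1) * t from by ring, max_eq_right hneg]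
      have huS : e2 (ρ + 2 * t) (ρ - (Real.sqrt 5 + 1) * t) ∈
          S (e2 (ρ + 2 * t) (-(2 * ρ) + (Real.sqrt 5 - 1) * t)) := by
        rw [huS2]; exact hS2mem _ hq'X
      have huW : e2 (ρ + 2 * t) (ρ - (Real.sqrt 5 + 1) * t) ∈ W := by
        apply hbW
        rw [mem_ball, dist_zero_right]
        have h1 := norm_le_abs_add (e2 (ρ + 2 * t) (ρ - (Real.sqrt 5 + 1) * t))
        rw [e2_zero, e2_one, abs_of_nonneg (by positivity : (0:ℝ) ≤ ρ + 2 * t),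
          abs_of_nonneg hneg] at h1
        nlinarith
      obtain ⟨u'', hu''S, hb⟩ := h (e2 ρ (-(2 * ρ))) ⟨hqX, hqV⟩
        (e2 (ρ + 2 * t) (-(2 * ρ) + (Real.sqrt 5 - 1) * t)) ⟨hq'X, hq'V⟩
        (e2 (ρ + 2 * t) (ρ - (Real.sqrt 5 + 1) * t)) ⟨huS, huW⟩
      have hdq : e2 (ρ + 2 * t) (-(2 * ρ) + (Real.sqrt 5 - 1) * t) - e2 ρ (-(2 * ρ)) =
          e2 (2 * t) ((Real.sqrt 5 - 1) * t) := by
        apply eu2_ext <;> simp <;> ring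
      have hnq : ‖e2 (ρ + 2 * t) (-(2 * ρ) + (Real.sqrt 5 - 1) * t) - e2 ρ (-(2 * ρ))‖
          ≤ 4 * t := by
        rw [hdq]
        have h1 := norm_le_abs_add (e2 (2 * t) ((Real.sqrt 5 - 1) * t))
        rw [e2_zero, e2_one, abs_of_nonneg (by positivity : (0:ℝ) ≤ 2 * t),
          abs_of_nonneg (by nlinarith : (0:ℝ) ≤ (Real.sqrt 5 - 1) * t)] at h1
        nlinarith
      rcases (hSchar _ hqX u'').mp hu''S with rfl | rfl
      · -- u'' = lcpS1 q : too far away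
        have hd0 : (e2 (ρ + 2 * t) (ρ - (Real.sqrt 5 + 1) * t) -
            lcpS1 (e2 ρ (-(2 * ρ)))) 0 = ρ + 2 * t := by
          simp [lcpS1]
        have habs := abs_apply_le_norm (e2 (ρ + 2 * t) (ρ - (Real.sqrt 5 + 1) * t) -
            lcpS1 (e2 ρ (-(2 * ρ)))) 0
        rw [hd0, abs_of_nonneg (by positivity : (0:ℝ) ≤ ρ + 2 * t)] at habs
        have hchain : κ' * ‖e2 (ρ + 2 * t) (-(2 * ρ) + (Real.sqrt 5 - 1) * t) -
            e2 ρ (-(2 * ρ))‖ ≤ κ' * (4 * t) :=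
          mul_le_mul_of_nonneg_left hnq hκ'0
        nlinarith
      · -- u'' = lcpS2 q : the singular-direction contradiction
        have hq2 : lcpS2 (e2 ρ (-(2 * ρ))) = e2 ρ ρ := by
          apply eu2_ext
          · simp [lcpS2]
          · simp only [lcpS2, e2_zero, e2_one]
            rw [show -(ρ + -(2 * ρ)) = ρ from by ring, max_eq_right hρpos.le]
        have hdiff : e2 (ρ + 2 * t) (ρ - (Real.sqrt 5 + 1) * t) -
            lcpS2 (e2 ρ (-(2 * ρ))) = e2 (2 * t) (-((Real.sqrt 5 + 1) * t)) := by
          rw [hq2]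
          apply eu2_ext <;> simp <;> ring
        rw [hdiff, hdq] at hb
        have hb2 : ‖e2 (2 * t) (-((Real.sqrt 5 + 1) * t))‖ ^ 2 ≤
            (κ' * ‖e2 (2 * t) ((Real.sqrt 5 - 1) * t)‖) ^ 2 :=
          pow_le_pow_left₀ (norm_nonneg _) hb 2
        rw [mul_pow, sq_norm_eu2, sq_norm_eu2, e2_zero, e2_one, e2_zero, e2_one] at hb2
        exact lcp_final κ' t htpos hκ'0 hcon (by linarith [hb2])
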